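/- Fix d ∈ (0,1) and an integer k₁ with k₁⁺ := max(k₁,0). There exist constants 𝒟 = 𝒟(d) and C = C(d) such that the following holds. Let Φ(ξ,η) = √(1+|ξ|²) ± √(1+d|ξ−η|²) − √(1+|η|²) (either choice of sign), let k ≥ k₁⁺ + 𝒟 − 10, and for ε > 0 define E_ε := {(ξ,η) ∈ ℝ³×ℝ³ : |ξ| ∈ [2^{k−8}, 2^{k+8}], |η| ∈ [2^{k−8}, 2^{k+8}], |ξ−η| ≤ 2^{k₁+8}, |Φ(ξ,η)| ≤ ε}. Then sup_{ξ∈ℝ³} ∫_{ℝ³} 1_{E_ε}(ξ,η) dη + sup_{η∈ℝ³} ∫_{ℝ³} 1_{E_ε}(ξ,η) dξ ≤ C ε 2^{3k₁⁺}. -/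

import Mathlib

noncomputable section
open MeasureTheory Set ENNReal Real

/-- Frequency space `ℝ³` (Euclidean). -/
abbrev E3 := EuclideanSpace ℝ (Fin 3)

set_option maxHeartbeats 1000000

open Real

lemma hasDerivAt_h (d s a W : ℝ) (hd : 0 < d) (hW : 0 ≤ W) (t : ℝ) :
    HasDerivAt (fun t => Real.sqrt (1 + (t ^ 2 + W)) + s * Real.sqrt (1 + d * ((t - a) ^ 2 + W)))
      (t / Real.sqrt (1 + (t ^ 2 + W))
        + s * (d * (t - a) / Real.sqrt (1 + d * ((t - a) ^ 2 + W)))) t := by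
  have pos1 : (0:ℝ) < 1 + (t ^ 2 + W) := by positivity
  have pos2 : (0:ℝ) < 1 + d * ((t - a) ^ 2 + W) := by positivity
  have h1 : HasDerivAt (fun t : ℝ => 1 + (t ^ 2 + W)) (2 * t) t := by
    simpa using ((hasDerivAt_pow 2 t).add_const W).const_add 1
  have h2 : HasDerivAt (fun t : ℝ => 1 + d * ((t - a) ^ 2 + W)) (d * (2 * (t - a))) t := by
    have : HasDerivAt (fun t : ℝ => (t - a) ^ 2) (2 * (t - a) ^ 1 * 1) t :=
      ((hasDerivAt_id t).sub_const a).pow 2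
    simpa [mul_comm, mul_assoc, mul_left_comm] using ((this.add_const W).const_mul d).const_add 1
  have h1s := h1.sqrt (ne_of_gt pos1)
  have h2s := (h2.sqrt (ne_of_gt pos2)).const_mul s
  have := h1s.add h2s
  refine this.congr_deriv ?_
  have s1 : Real.sqrt (1 + (t ^ 2 + W)) ≠ 0 := by positivity
  have s2 : Real.sqrt (1 + d * ((t - a) ^ 2 + W)) ≠ 0 := by positivity
  field_simp

lemma deriv_ge (d s a W t : ℝ) (hd : 0 < d) (hd1 : d < 1) (hs : s = 1 ∨ s = -1) (hW : 0 ≤ W)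
    (ht : 0 < t) (hmain : 1 + W ≤ t ^ 2 * (1 - ((1 + 3 * Real.sqrt d) / 4) ^ 2)) :
    (1 - Real.sqrt d) / 4 ≤ t / Real.sqrt (1 + (t ^ 2 + W))
        + s * (d * (t - a) / Real.sqrt (1 + d * ((t - a) ^ 2 + W))) := by
  set sd := Real.sqrt d with hsd
  have hsd0 : 0 ≤ sd := Real.sqrt_nonneg d
  have hsd1 : sd < 1 := by
    rw [hsd]; rw [show (1:ℝ) = Real.sqrt 1 by simp]
    exact Real.sqrt_lt_sqrt hd.le hd1
  set β : ℝ := (1 + 3 * sd) / 4 with hβ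
  have hβ0 : 0 < β := by positivity
  have hβ1 : β < 1 := by rw [hβ]; linarith
  have pos1 : (0:ℝ) < 1 + (t ^ 2 + W) := by positivity
  have pos2 : (0:ℝ) < 1 + d * ((t - a) ^ 2 + W) := by positivity
  have hsq1 : (0:ℝ) < Real.sqrt (1 + (t ^ 2 + W)) := Real.sqrt_pos.2 pos1
  have hsq2 : (0:ℝ) < Real.sqrt (1 + d * ((t - a) ^ 2 + W)) := Real.sqrt_pos.2 pos2
  -- first term ≥ β
  have hfirst : β ≤ t / Real.sqrt (1 + (t ^ 2 + W)) := by
    rw [le_div_iff₀ hsq1]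
    have h1 : β * Real.sqrt (1 + (t ^ 2 + W)) = Real.sqrt (β ^ 2 * (1 + (t ^ 2 + W))) := by
      rw [Real.sqrt_mul (sq_nonneg β), Real.sqrt_sq hβ0.le]
    rw [h1]
    have h2 : β ^ 2 * (1 + (t ^ 2 + W)) ≤ t ^ 2 := by nlinarith [sq_nonneg β, sq_nonneg t]
    calc Real.sqrt (β ^ 2 * (1 + (t ^ 2 + W))) ≤ Real.sqrt (t ^ 2) := Real.sqrt_le_sqrt h2
      _ = t := by rw [Real.sqrt_sq ht.le]
  -- second term ≥ -sd
  have hsecond : -sd ≤ s * (d * (t - a) / Real.sqrt (1 + d * ((t - a) ^ 2 + W))) := by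
    have habs : |s * (d * (t - a) / Real.sqrt (1 + d * ((t - a) ^ 2 + W)))| ≤ sd := by
      have hs1 : |s| = 1 := by rcases hs with h | h <;> simp [h]
      rw [abs_mul, hs1, one_mul, abs_div, abs_of_pos hsq2]
      rw [div_le_iff₀ hsq2]
      have key : |d * (t - a)| = sd * Real.sqrt (d * (t - a) ^ 2) := by
        rw [abs_mul, abs_of_pos hd, Real.sqrt_mul hd.le, Real.sqrt_sq_eq_abs, hsd,
          ← mul_assoc, Real.mul_self_sqrt hd.le]
      rw [key]
      have : Real.sqrt (d * (t - a) ^ 2) ≤ Real.sqrt (1 + d * ((t - a) ^ 2 + W)) := by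
        apply Real.sqrt_le_sqrt; nlinarith
      exact mul_le_mul_of_nonneg_left this hsd0
    linarith [neg_abs_le (s * (d * (t - a) / Real.sqrt (1 + d * ((t - a) ^ 2 + W)))), habs]
  have hfin : (1 - sd) / 4 = β - sd := by rw [hβ]; ring
  linarith
open MeasureTheory Set ENNReal Real

lemma slice_diam (d s a W T₀ ε A : ℝ) (hd : 0 < d) (hd1 : d < 1) (hs : s = 1 ∨ s = -1)
    (hW : 0 ≤ W) (hT₀ : 0 < T₀)
    (hmain : ∀ t : ℝ, T₀ ≤ t → 1 + W ≤ t ^ 2 * (1 - ((1 + 3 * Real.sqrt d) / 4) ^ 2))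
    (hder : ∀ t : ℝ, HasDerivAt
      (fun t => Real.sqrt (1 + (t ^ 2 + W)) + s * Real.sqrt (1 + d * ((t - a) ^ 2 + W)))
      (t / Real.sqrt (1 + (t ^ 2 + W))
        + s * (d * (t - a) / Real.sqrt (1 + d * ((t - a) ^ 2 + W)))) t)
    (dge : ∀ t : ℝ, 0 < t → 1 + W ≤ t ^ 2 * (1 - ((1 + 3 * Real.sqrt d) / 4) ^ 2) →
      (1 - Real.sqrt d) / 4 ≤ t / Real.sqrt (1 + (t ^ 2 + W))
        + s * (d * (t - a) / Real.sqrt (1 + d * ((t - a) ^ 2 + W))))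
    (t t' : ℝ) (ht : T₀ ≤ t) (ht' : T₀ ≤ t')
    (hA : |Real.sqrt (1 + (t ^ 2 + W)) + s * Real.sqrt (1 + d * ((t - a) ^ 2 + W)) - A| ≤ ε)
    (hA' : |Real.sqrt (1 + (t' ^ 2 + W)) + s * Real.sqrt (1 + d * ((t' - a) ^ 2 + W)) - A| ≤ ε) :
    |t - t'| * ((1 - Real.sqrt d) / 4) ≤ 2 * ε := by
  set h : ℝ → ℝ := fun t =>
    Real.sqrt (1 + (t ^ 2 + W)) + s * Real.sqrt (1 + d * ((t - a) ^ 2 + W)) with hh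
  set c : ℝ := (1 - Real.sqrt d) / 4 with hc
  have key : ∀ u v : ℝ, T₀ ≤ u → T₀ ≤ v → u ≤ v →
      |h u - A| ≤ ε → |h v - A| ≤ ε → (v - u) * c ≤ 2 * ε := by
    intro u v hu hv huv hAu hAv
    have mvt := Convex.mul_sub_le_image_sub_of_le_deriv (convex_Ici T₀) (f := h) (C := c)
      (fun x _ => ((hder x).differentiableAt).continuousAt.continuousWithinAt)
      (fun x _ => ((hder x).differentiableAt).differentiableWithinAt)
      (fun x hx => by
        rw [(hder x).deriv]
        have hx' : T₀ < x := by rwa [interior_Ici, mem_Ioi] at hx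
        exact dge x (hT₀.trans hx') (hmain x hx'.le))
      u hu v hv huv
    have h1 : h v - h u ≤ 2 * ε := by
      have := abs_le.1 hAu
      have := abs_le.1 hAv
      linarith
    linarith [mvt]
  rcases le_total t t' with hle | hle
  · rw [abs_sub_comm, abs_of_nonneg (by linarith)]
    exact key t t' ht ht' hle hA hA'
  · rw [abs_of_nonneg (by linarith)]
    exact key t' t ht' ht hle hA' hA

lemma volume_le_of_slices (T : Set (ℝ × (Fin 2 → ℝ))) (hT : MeasurableSet T) (L r : ℝ)
    (hL : 0 ≤ L) (hr : 0 ≤ r)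
    (hslice : ∀ w t t', (t, w) ∈ T → (t', w) ∈ T → |t - t'| ≤ L)
    (hbox : ∀ w t, (t, w) ∈ T → ∀ j, |w j| ≤ r) :
    volume T ≤ ENNReal.ofReal (2 * L) * ENNReal.ofReal ((2 * r) ^ 2) := by
  have hbox_meas : MeasurableSet (Set.pi univ fun _ : Fin 2 => Icc (-r) r) :=
    MeasurableSet.univ_pi fun _ => measurableSet_Icc
  rw [MeasureTheory.Measure.volume_eq_prod, Measure.prod_apply_symm hT]
  have hpt : ∀ w : Fin 2 → ℝ, volume ((fun t => (t, w)) ⁻¹' T)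
      ≤ (Set.pi univ fun _ : Fin 2 => Icc (-r) r).indicator
          (fun _ => ENNReal.ofReal (2 * L)) w := by
    intro w
    by_cases hw : ∃ t, (t, w) ∈ T
    · obtain ⟨t₀, ht₀⟩ := hw
      have hsub : (fun t => (t, w)) ⁻¹' T ⊆ Icc (t₀ - L) (t₀ + L) := by
        intro t ht
        have := hslice w t t₀ ht ht₀
        have := abs_le.1 this
        constructor <;> simp at this ⊢ <;> linarith [this.1, this.2]
      have hwbox : w ∈ Set.pi univ fun _ : Fin 2 => Icc (-r) r := by
        intro j _
        have := abs_le.1 (hbox w t₀ ht₀ j)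
        exact ⟨this.1, this.2⟩
      rw [Set.indicator_of_mem hwbox]
      calc volume ((fun t => (t, w)) ⁻¹' T) ≤ volume (Icc (t₀ - L) (t₀ + L)) :=
            measure_mono hsub
        _ = ENNReal.ofReal (2 * L) := by rw [Real.volume_Icc]; ring_nf
    · have : (fun t => (t, w)) ⁻¹' T = ∅ := by
        ext t; simp only [mem_preimage, mem_empty_iff_false, iff_false]
        exact fun h => hw ⟨t, h⟩
      rw [this]
      simp
  calc ∫⁻ w, volume ((fun t => (t, w)) ⁻¹' T)
      ≤ ∫⁻ w, (Set.pi univ fun _ : Fin 2 => Icc (-r) r).indicator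
          (fun _ => ENNReal.ofReal (2 * L)) w := lintegral_mono hpt
    _ = ENNReal.ofReal (2 * L) * volume (Set.pi univ fun _ : Fin 2 => Icc (-r) r) :=
        lintegral_indicator_const hbox_meas _
    _ ≤ ENNReal.ofReal (2 * L) * ENNReal.ofReal ((2 * r) ^ 2) := by
        gcongr
        rw [volume_pi_pi]
        simp only [Real.volume_Icc]
        rw [Fin.prod_const]
        rw [show r - -r = 2 * r by ring, ← ENNReal.ofReal_pow (by positivity)]
open Real

lemma numeric_main (μ D : ℝ) (hμ0 : 0 < μ) (hμ1 : μ ≤ 1)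
    (hD : D = max 55 (Real.logb 2 ((2:ℝ) ^ (55:ℝ) / μ))) (k₁ k : ℤ)
    (hk : ((max k₁ 0 : ℤ) : ℝ) + D - 10 ≤ (k : ℝ)) :
    1 + ((2:ℝ) ^ (k₁ + 8 : ℤ)) ^ 2 ≤ ((2:ℝ) ^ (k - 9 : ℤ)) ^ 2 * μ := by
  set K : ℤ := max k₁ 0 with hK
  have hK0 : (0:ℤ) ≤ K := le_max_right _ _
  have hKk₁ : k₁ ≤ K := le_max_left _ _
  have hD55 : (55:ℝ) ≤ D := hD ▸ le_max_left _ _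
  have h2D : (2:ℝ) ^ (55:ℝ) / μ ≤ (2:ℝ) ^ D := by
    have hX : (0:ℝ) < (2:ℝ) ^ (55:ℝ) / μ := by positivity
    calc (2:ℝ) ^ (55:ℝ) / μ = (2:ℝ) ^ (Real.logb 2 ((2:ℝ) ^ (55:ℝ) / μ)) :=
          (Real.rpow_logb two_pos (by norm_num) hX).symm
      _ ≤ (2:ℝ) ^ D := Real.rpow_le_rpow_of_exponent_le one_le_two (hD ▸ le_max_right _ _)
  -- step 1 : LHS ≤ 2^(2K+17)
  have sq1 : ((2:ℝ) ^ (k₁ + 8 : ℤ)) ^ 2 = (2:ℝ) ^ (2 * k₁ + 16 : ℤ) := by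
    rw [← zpow_natCast ((2:ℝ) ^ (k₁ + 8 : ℤ)) 2, ← zpow_mul]
    norm_num; ring_nf
  have step1 : 1 + ((2:ℝ) ^ (k₁ + 8 : ℤ)) ^ 2 ≤ (2:ℝ) ^ (2 * K + 17 : ℤ) := by
    rw [sq1]
    have h1 : (2:ℝ) ^ (2 * k₁ + 16 : ℤ) ≤ (2:ℝ) ^ (2 * K + 16 : ℤ) :=
      zpow_le_zpow_right₀ one_le_two (by omega)
    have h2 : (1:ℝ) ≤ (2:ℝ) ^ (2 * K + 16 : ℤ) := one_le_zpow₀ one_le_two (by omega)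
    have h3 : (2:ℝ) ^ (2 * K + 17 : ℤ) = (2:ℝ) ^ (2 * K + 16 : ℤ) * 2 := by
      rw [show (2*K+17:ℤ) = 2*K+16+1 by ring, ← zpow_add_one₀ (two_ne_zero)]
    linarith
  -- step 2 : 2^(2K+17) ≤ 2^(2k-18) * μ
  have sq2 : ((2:ℝ) ^ (k - 9 : ℤ)) ^ 2 = (2:ℝ) ^ (2 * k - 18 : ℤ) := by
    rw [← zpow_natCast ((2:ℝ) ^ (k - 9 : ℤ)) 2, ← zpow_mul]
    norm_num; ring_nf
  have step2 : (2:ℝ) ^ (2 * K + 17 : ℤ) ≤ (2:ℝ) ^ (2 * k - 18 : ℤ) * μ := by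
    have hz2r : ∀ m : ℤ, (2:ℝ) ^ m = (2:ℝ) ^ (m : ℝ) := fun m => (Real.rpow_intCast 2 m).symm
    rw [hz2r, hz2r]
    have hslack : (0:ℝ) ≤ (k : ℝ) - (K : ℝ) - D + 10 := by linarith
    have hexp : ((2 * k - 18 : ℤ) : ℝ)
        = ((2 * K + 17 : ℤ) : ℝ) + (2 * D - 55) + 2 * ((k : ℝ) - (K : ℝ) - D + 10) := by
      push_cast; ring
    rw [hexp, Real.rpow_add two_pos, Real.rpow_add two_pos]
    have f1 : (1:ℝ) ≤ (2:ℝ) ^ (2 * ((k : ℝ) - (K : ℝ) - D + 10)) := by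
      rw [show (1:ℝ) = (2:ℝ) ^ (0:ℝ) by simp]
      exact Real.rpow_le_rpow_of_exponent_le one_le_two (by linarith)
    have f2 : (1:ℝ) ≤ (2:ℝ) ^ (2 * D - 55) * μ := by
      have e : (2:ℝ) ^ (2 * D - 55) = (2:ℝ) ^ D * (2:ℝ) ^ (D - 55) := by
        rw [← Real.rpow_add two_pos]; ring_nf
      have g1 : (1:ℝ) ≤ (2:ℝ) ^ (D - 55) := by
        rw [show (1:ℝ) = (2:ℝ) ^ (0:ℝ) by simp]
        exact Real.rpow_le_rpow_of_exponent_le one_le_two (by linarith)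
      have h155 : (1:ℝ) ≤ (2:ℝ) ^ (55:ℝ) := by
        rw [show (1:ℝ) = (2:ℝ) ^ (0:ℝ) by simp]
        exact Real.rpow_le_rpow_of_exponent_le one_le_two (by norm_num)
      have g2 : 1 / μ ≤ (2:ℝ) ^ D := by
        calc 1 / μ ≤ (2:ℝ) ^ (55:ℝ) / μ := by gcongr
          _ ≤ (2:ℝ) ^ D := h2D
      rw [e]
      have hDpos : (0:ℝ) < (2:ℝ) ^ D := by positivity
      have q1 : (2:ℝ) ^ D * 1 ≤ (2:ℝ) ^ D * (2:ℝ) ^ (D - 55) :=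
        mul_le_mul_of_nonneg_left g1 hDpos.le
      have q2 : (1 / μ) * μ ≤ ((2:ℝ) ^ D * (2:ℝ) ^ (D - 55)) * μ :=
        mul_le_mul_of_nonneg_right (by linarith) hμ0.le
      have q3 : (1 / μ) * μ = 1 := by field_simp
      linarith
    set X := (2:ℝ) ^ (((2 * K + 17 : ℤ)) : ℝ) with hX
    have hXpos : (0:ℝ) < X := by positivity
    calc X = X * 1 * 1 := by ring
      _ ≤ X * ((2:ℝ) ^ (2 * D - 55) * μ) * (2:ℝ) ^ (2 * ((k : ℝ) - (K : ℝ) - D + 10)) := by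
          apply mul_le_mul (mul_le_mul le_rfl f2 zero_le_one hXpos.le) f1 zero_le_one
            (by positivity)
      _ = X * (2:ℝ) ^ (2 * D - 55) * (2:ℝ) ^ (2 * ((k : ℝ) - (K : ℝ) - D + 10)) * μ := by
          ring
  rw [sq2]
  linarith



lemma schur_half (d : ℝ) (hd : d ∈ Ioo (0:ℝ) 1) :
    ∃ D C : ℝ, 0 < D ∧ 0 < C ∧
      ∀ (k₁ : ℤ) (s : ℝ), (s = 1 ∨ s = -1) →
      ∀ k : ℤ, ((max k₁ 0 : ℤ) : ℝ) + D - 10 ≤ (k : ℝ) →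
      ∀ ε : ℝ, 0 < ε → ∀ η : E3,
      volume {x : E3 |
          ‖x‖ ∈ Icc ((2:ℝ) ^ (k - 8)) ((2:ℝ) ^ (k + 8)) ∧
          ‖η‖ ∈ Icc ((2:ℝ) ^ (k - 8)) ((2:ℝ) ^ (k + 8)) ∧
          ‖x - η‖ ≤ (2:ℝ) ^ (k₁ + 8) ∧
          |Real.sqrt (1 + ‖x‖ ^ 2) + s * Real.sqrt (1 + d * ‖x - η‖ ^ 2)
            - Real.sqrt (1 + ‖η‖ ^ 2)| ≤ ε}
        ≤ ENNReal.ofReal (C * ε * (2:ℝ) ^ (3 * max k₁ 0)) := by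
  obtain ⟨hd0, hd1⟩ := hd
  have hsd0 : 0 ≤ Real.sqrt d := Real.sqrt_nonneg d
  have hsd1 : Real.sqrt d < 1 := by
    rw [show (1:ℝ) = Real.sqrt 1 by simp]
    exact Real.sqrt_lt_sqrt hd0.le hd1
  set c : ℝ := (1 - Real.sqrt d) / 4 with hc
  have hc0 : 0 < c := by rw [hc]; linarith
  set β : ℝ := (1 + 3 * Real.sqrt d) / 4 with hβ
  have hβ0 : 0 < β := by positivity
  have hβ1 : β < 1 := by rw [hβ]; linarith
  set μ : ℝ := 1 - β ^ 2 with hμ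
  have hμ0 : 0 < μ := by rw [hμ]; nlinarith
  have hμ1 : μ ≤ 1 := by rw [hμ]; nlinarith
  refine ⟨max 55 (Real.logb 2 ((2:ℝ) ^ (55:ℝ) / μ)), (2:ℝ) ^ (21:ℤ) / c,
    lt_of_lt_of_le (by norm_num) (le_max_left _ _), by positivity, ?_⟩
  set D : ℝ := max 55 (Real.logb 2 ((2:ℝ) ^ (55:ℝ) / μ)) with hDdef
  intro k₁ s hs k hk ε hε η
  set K : ℤ := max k₁ 0 with hK
  have hK0 : (0:ℤ) ≤ K := le_max_right _ _
  have hKk₁ : k₁ ≤ K := le_max_left _ _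
  have hD55 : (55:ℝ) ≤ D := le_max_left _ _
  set lo : ℝ := (2:ℝ) ^ (k - 8 : ℤ) with hlo
  set hi : ℝ := (2:ℝ) ^ (k + 8 : ℤ) with hhi
  set r : ℝ := (2:ℝ) ^ (k₁ + 8 : ℤ) with hr
  have hlo0 : 0 < lo := by positivity
  have hr0 : 0 < r := by positivity
  by_cases hη : ‖η‖ ∈ Icc lo hi
  swap
  · have hempty : {x : E3 |
        ‖x‖ ∈ Icc lo hi ∧ ‖η‖ ∈ Icc lo hi ∧ ‖x - η‖ ≤ r ∧
        |Real.sqrt (1 + ‖x‖ ^ 2) + s * Real.sqrt (1 + d * ‖x - η‖ ^ 2)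
          - Real.sqrt (1 + ‖η‖ ^ 2)| ≤ ε} = ∅ :=
      eq_empty_of_forall_notMem fun x hx => hη hx.2.1
    rw [hempty, measure_empty]
    exact zero_le
  -- main case
  have hkk₁ : k₁ + 17 ≤ k := by
    have h1 : (k₁ : ℝ) + 45 ≤ (k : ℝ) := by
      have : (k₁ : ℝ) ≤ (K : ℤ) := by exact_mod_cast hKk₁
      push_cast at this ⊢
      linarith
    have : (k₁ : ℝ) + 17 ≤ (k : ℝ) := by linarith
    exact_mod_cast this
  have ha0 : 0 < ‖η‖ := lt_of_lt_of_le hlo0 hη.1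
  have hη0 : η ≠ 0 := by simpa using ha0.ne'
  set a : ℝ := ‖η‖ with haa
  set A : ℝ := Real.sqrt (1 + a ^ 2) with hA
  set T : Set (ℝ × (Fin 2 → ℝ)) := {p |
    Real.sqrt (p.1 ^ 2 + ((p.2 0) ^ 2 + (p.2 1) ^ 2)) ∈ Icc lo hi ∧
    Real.sqrt ((p.1 - a) ^ 2 + ((p.2 0) ^ 2 + (p.2 1) ^ 2)) ≤ r ∧
    |Real.sqrt (1 + (p.1 ^ 2 + ((p.2 0) ^ 2 + (p.2 1) ^ 2)))
      + s * Real.sqrt (1 + d * ((p.1 - a) ^ 2 + ((p.2 0) ^ 2 + (p.2 1) ^ 2))) - A| ≤ ε}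
    with hT
  have hTmeas : MeasurableSet T := by
    apply IsClosed.measurableSet
    rw [hT, show {p : ℝ × (Fin 2 → ℝ) |
        Real.sqrt (p.1 ^ 2 + ((p.2 0) ^ 2 + (p.2 1) ^ 2)) ∈ Icc lo hi ∧
        Real.sqrt ((p.1 - a) ^ 2 + ((p.2 0) ^ 2 + (p.2 1) ^ 2)) ≤ r ∧
        |Real.sqrt (1 + (p.1 ^ 2 + ((p.2 0) ^ 2 + (p.2 1) ^ 2)))
          + s * Real.sqrt (1 + d * ((p.1 - a) ^ 2 + ((p.2 0) ^ 2 + (p.2 1) ^ 2))) - A| ≤ ε}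
      = ((fun p : ℝ × (Fin 2 → ℝ) =>
            Real.sqrt (p.1 ^ 2 + ((p.2 0) ^ 2 + (p.2 1) ^ 2))) ⁻¹' (Icc lo hi))
        ∩ ({p : ℝ × (Fin 2 → ℝ) |
              Real.sqrt ((p.1 - a) ^ 2 + ((p.2 0) ^ 2 + (p.2 1) ^ 2)) ≤ r}
          ∩ {p : ℝ × (Fin 2 → ℝ) |
              |Real.sqrt (1 + (p.1 ^ 2 + ((p.2 0) ^ 2 + (p.2 1) ^ 2)))
                + s * Real.sqrt (1 + d * ((p.1 - a) ^ 2 + ((p.2 0) ^ 2 + (p.2 1) ^ 2))) - A|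
                ≤ ε}) from rfl]
    refine IsClosed.inter (IsClosed.preimage (by fun_prop) isClosed_Icc)
      (IsClosed.inter (isClosed_le (by fun_prop) continuous_const)
        (isClosed_le (by fun_prop) continuous_const))
  -- slice estimates
  set T₀ : ℝ := lo - r with hT₀def
  have hrlo : r ≤ (2:ℝ) ^ (k - 9 : ℤ) := by
    rw [hr]
    exact zpow_le_zpow_right₀ one_le_two (by omega)
  have hlosplit : lo = (2:ℝ) ^ (k - 9 : ℤ) * 2 := by
    rw [hlo, show (k - 8 : ℤ) = (k - 9) + 1 by ring, zpow_add_one₀ two_ne_zero]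
  have hT₀ge : (2:ℝ) ^ (k - 9 : ℤ) ≤ T₀ := by
    rw [hT₀def, hlosplit]; linarith
  have hT₀pos : 0 < T₀ := lt_of_lt_of_le (by positivity) hT₀ge
  have hnum : 1 + r ^ 2 ≤ ((2:ℝ) ^ (k - 9 : ℤ)) ^ 2 * μ :=
    numeric_main μ D hμ0 hμ1 hDdef k₁ k hk
  have hbox : ∀ (w : Fin 2 → ℝ) (t : ℝ), (t, w) ∈ T → ∀ j, |w j| ≤ r := by
    intro w t htw j
    obtain ⟨-, h2, -⟩ := htw
    have hX0 : (0:ℝ) ≤ (t - a) ^ 2 + ((w 0) ^ 2 + (w 1) ^ 2) := by positivity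
    have hXr : (t - a) ^ 2 + ((w 0) ^ 2 + (w 1) ^ 2) ≤ r ^ 2 := by
      have := Real.sq_sqrt hX0
      nlinarith [Real.sqrt_nonneg ((t - a) ^ 2 + ((w 0) ^ 2 + (w 1) ^ 2))]
    have hj : (w j) ^ 2 ≤ r ^ 2 := by
      fin_cases j
      · show w 0 ^ 2 ≤ r ^ 2
        nlinarith [sq_nonneg (t - a), sq_nonneg (w 1)]
      · show w 1 ^ 2 ≤ r ^ 2
        nlinarith [sq_nonneg (t - a), sq_nonneg (w 0)]
    calc |w j| = Real.sqrt ((w j) ^ 2) := (Real.sqrt_sq_eq_abs _).symm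
      _ ≤ Real.sqrt (r ^ 2) := Real.sqrt_le_sqrt hj
      _ = r := Real.sqrt_sq hr0.le
  have hslice : ∀ (w : Fin 2 → ℝ) (t t' : ℝ), (t, w) ∈ T → (t', w) ∈ T →
      |t - t'| ≤ 2 * ε / c := by
    intro w t t' htw htw'
    set W : ℝ := (w 0) ^ 2 + (w 1) ^ 2 with hWdef
    have hW0 : 0 ≤ W := by positivity
    have hfacts : ∀ u : ℝ, (u, w) ∈ T → T₀ ≤ u ∧ W ≤ r ^ 2 := by
      intro u huw
      obtain ⟨h1, h2, -⟩ := huw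
      have hX0 : (0:ℝ) ≤ (u - a) ^ 2 + W := by positivity
      have hXr : (u - a) ^ 2 + W ≤ r ^ 2 := by
        have := Real.sq_sqrt hX0
        nlinarith [Real.sqrt_nonneg ((u - a) ^ 2 + W)]
      have huar : |u - a| ≤ r := by
        calc |u - a| = Real.sqrt ((u - a) ^ 2) := (Real.sqrt_sq_eq_abs _).symm
          _ ≤ Real.sqrt (r ^ 2) := Real.sqrt_le_sqrt (by nlinarith)
          _ = r := Real.sqrt_sq hr0.le
      have hua := abs_le.1 huar
      have : lo - r ≤ u := by
        have := hη.1
        rw [haa] at this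
        linarith [this, hua.1]
      exact ⟨by rwa [hT₀def], by nlinarith⟩
    obtain ⟨ht1, hWr⟩ := hfacts t htw
    obtain ⟨ht1', -⟩ := hfacts t' htw'
    have hmainW : ∀ u : ℝ, T₀ ≤ u → 1 + W ≤ u ^ 2 * (1 - ((1 + 3 * Real.sqrt d) / 4) ^ 2) := by
      intro u hu
      have hu0 : (2:ℝ) ^ (k - 9 : ℤ) ≤ u := le_trans hT₀ge hu
      have hu2 : ((2:ℝ) ^ (k - 9 : ℤ)) ^ 2 ≤ u ^ 2 := by
        apply pow_le_pow_left₀ (by positivity) hu0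
      have : 1 + W ≤ 1 + r ^ 2 := by linarith
      rw [← hβ, ← hμ]
      nlinarith [hnum, hμ0]
    have hd1' := slice_diam d s a W T₀ ε A hd0 hd1 hs hW0 hT₀pos hmainW
      (hasDerivAt_h d s a W hd0 hW0)
      (fun u hu hm => deriv_ge d s a W u hd0 hd1 hs hW0 hu hm)
      t t' ht1 ht1' htw.2.2 htw'.2.2
    rw [le_div_iff₀ hc0]
    calc |t - t'| * c = |t - t'| * ((1 - Real.sqrt d) / 4) := by rw [hc]
      _ ≤ 2 * ε := hd1'
  -- orthonormal basis adapted to η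
  have hu : ‖‖η‖⁻¹ • η‖ = 1 := norm_smul_inv_norm hη0
  have horth : Orthonormal ℝ (({0} : Set (Fin 3)).restrict fun _ => ‖η‖⁻¹ • η) := by
    constructor
    · intro i; exact hu
    · intro i j hij
      exact absurd (Subtype.ext (by
        have hi := i.2; have hj := j.2
        simp only [mem_singleton_iff] at hi hj
        rw [hi, hj])) hij
  have hcard : Module.finrank ℝ E3 = Fintype.card (Fin 3) := by
    simp [finrank_euclideanSpace]
  obtain ⟨b, hb⟩ := horth.exists_orthonormalBasis_extension_of_card_eq hcard
  have hb0 : b 0 = ‖η‖⁻¹ • η := hb 0 rfl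
  have hηb : η = a • b 0 := by
    rw [hb0, smul_smul, haa, mul_inv_cancel₀ ha0.ne', one_smul]
  have hrepr_η : ∀ i, b.repr η i = if i = 0 then a else 0 := by
    intro i
    rw [hηb, _root_.map_smul, b.repr_self]
    simp [EuclideanSpace.single_apply]
  have hnorm : ∀ x : E3, ‖x‖ ^ 2
      = (b.repr x 0) ^ 2 + ((b.repr x 1) ^ 2 + (b.repr x 2) ^ 2) := by
    intro x
    rw [← b.repr.norm_map x, EuclideanSpace.norm_eq, Real.sq_sqrt (by positivity)]
    simp [Fin.sum_univ_three, sq_abs]; ring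
  have hnorm' : ∀ x : E3, ‖x - η‖ ^ 2
      = (b.repr x 0 - a) ^ 2 + ((b.repr x 1) ^ 2 + (b.repr x 2) ^ 2) := by
    intro x
    rw [hnorm (x - η)]
    simp [map_sub, hrepr_η]
  -- the measure-preserving coordinate map
  set F : E3 → ℝ × (Fin 2 → ℝ) := fun x =>
    (MeasurableEquiv.piFinSuccAbove (fun _ : Fin 3 => ℝ) 0)
      ((MeasurableEquiv.toLp 2 (Fin 3 → ℝ)).symm (b.repr x)) with hF
  have hmp : MeasurePreserving F volume volume := by
    rw [hF]
    exact ((volume_preserving_piFinSuccAbove (fun _ : Fin 3 => ℝ) 0).comp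
      ((EuclideanSpace.volume_preserving_symm_measurableEquiv_toLp (Fin 3)).comp
        b.measurePreserving_repr))
  have hFx : ∀ x : E3, F x = (b.repr x 0, fun j : Fin 2 => b.repr x j.succ) := by
    intro x
    simp [hF, MeasurableEquiv.piFinSuccAbove, MeasurableEquiv.toLp,
      Fin.zero_succAbove]
    exact ⟨rfl, rfl⟩
  have hsucc0 : (Fin.succ (0 : Fin 2)) = (1 : Fin 3) := rfl
  have hsucc1 : (Fin.succ (1 : Fin 2)) = (2 : Fin 3) := rfl
  have hset : {x : E3 |
      ‖x‖ ∈ Icc lo hi ∧ ‖η‖ ∈ Icc lo hi ∧ ‖x - η‖ ≤ r ∧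
      |Real.sqrt (1 + ‖x‖ ^ 2) + s * Real.sqrt (1 + d * ‖x - η‖ ^ 2)
        - Real.sqrt (1 + ‖η‖ ^ 2)| ≤ ε} = F ⁻¹' T := by
    ext x
    rw [mem_preimage, hFx x]
    simp only [hT, mem_setOf_eq, Fin.succ_zero_eq_one, Fin.succ_one_eq_two]
    have e1 : ‖x‖ = Real.sqrt ((b.repr x 0) ^ 2 + ((b.repr x 1) ^ 2 + (b.repr x 2) ^ 2)) := by
      rw [← hnorm x, Real.sqrt_sq (norm_nonneg x)]
    have e2 : ‖x - η‖
        = Real.sqrt ((b.repr x 0 - a) ^ 2 + ((b.repr x 1) ^ 2 + (b.repr x 2) ^ 2)) := by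
      rw [← hnorm' x, Real.sqrt_sq (norm_nonneg _)]
    constructor
    · rintro ⟨h1, -, h3, h4⟩
      refine ⟨by rwa [← e1], by rwa [← e2], ?_⟩
      rwa [hnorm x, hnorm' x, ← haa, ← hA] at h4
    · rintro ⟨h1, h3, h4⟩
      refine ⟨by rwa [e1], hη, by rwa [e2], ?_⟩
      rwa [hnorm x, hnorm' x, ← haa, ← hA]
  rw [hset, hmp.measure_preimage hTmeas.nullMeasurableSet]
  have hvol := volume_le_of_slices T hTmeas (2 * ε / c) r (by positivity) hr0.le hslice hbox
  refine le_trans hvol ?_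
  rw [← ENNReal.ofReal_mul (by positivity)]
  apply ENNReal.ofReal_le_ofReal
  -- final numeric bound
  have hr2 : r ^ 2 = (2:ℝ) ^ (2 * k₁ + 16 : ℤ) := by
    rw [hr, ← zpow_natCast ((2:ℝ) ^ (k₁ + 8 : ℤ)) 2, ← zpow_mul]
    norm_num; ring_nf
  have hzle : (2:ℝ) ^ (2 * k₁ + 20 : ℤ) ≤ (2:ℝ) ^ (3 * K + 21 : ℤ) :=
    zpow_le_zpow_right₀ one_le_two (by omega)
  have hsplit1 : (2:ℝ) ^ (2 * k₁ + 20 : ℤ) = (2:ℝ) ^ (2 * k₁ + 16 : ℤ) * 16 := by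
    rw [show (2 * k₁ + 20 : ℤ) = (2 * k₁ + 16) + 4 by ring, zpow_add₀ two_ne_zero]
    norm_num
  have hsplit2 : (2:ℝ) ^ (3 * K + 21 : ℤ) = (2:ℝ) ^ (21:ℤ) * (2:ℝ) ^ (3 * K : ℤ) := by
    rw [← zpow_add₀ two_ne_zero]; ring_nf
  have hchain : 2 * (2 * ε / c) * ((2 * r) ^ 2) = (ε / c) * ((2:ℝ) ^ (2 * k₁ + 16 : ℤ) * 16) := by
    rw [← hr2]; field_simp; ring
  rw [hchain]
  rw [show (2:ℝ) ^ (21:ℤ) / c * ε * (2:ℝ) ^ (3 * K : ℤ)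
      = (ε / c) * ((2:ℝ) ^ (21:ℤ) * (2:ℝ) ^ (3 * K : ℤ)) by field_simp]
  rw [← hsplit2, ← hsplit1]
  exact mul_le_mul_of_nonneg_left hzle (by positivity)

/-- improved Schur bound for the `(b;±e,b)` phases: with
`Φ(ξ,η) = √(1+|ξ|²) ± √(1+d|ξ−η|²) − √(1+|η|²)` and `k ≥ k₁⁺ + 𝒟 − 10`, the sublevel set
`E_ε = {|ξ|,|η| ∈ [2^{k−8},2^{k+8}], |ξ−η| ≤ 2^{k₁+8}, |Φ| ≤ ε}` satisfies
`sup_ξ |(E_ε)_ξ| + sup_η |(E_ε)^η| ≤ C ε 2^{3k₁⁺}`. -/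
theorem improved_schur_bound (d : ℝ) (hd : d ∈ Ioo (0:ℝ) 1) (k₁ : ℤ) :
    ∃ D C : ℝ, 0 < D ∧ 0 < C ∧
      ∀ s : ℝ, (s = 1 ∨ s = -1) →
      ∀ k : ℤ, ((max k₁ 0 : ℤ) : ℝ) + D - 10 ≤ (k : ℝ) →
      ∀ ε : ℝ, 0 < ε →
      ∀ ξ η : E3,
        volume {η' : E3 |
            ‖ξ‖ ∈ Icc ((2:ℝ) ^ (k - 8)) ((2:ℝ) ^ (k + 8)) ∧
            ‖η'‖ ∈ Icc ((2:ℝ) ^ (k - 8)) ((2:ℝ) ^ (k + 8)) ∧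
            ‖ξ - η'‖ ≤ (2:ℝ) ^ (k₁ + 8) ∧
            |Real.sqrt (1 + ‖ξ‖ ^ 2) + s * Real.sqrt (1 + d * ‖ξ - η'‖ ^ 2)
              - Real.sqrt (1 + ‖η'‖ ^ 2)| ≤ ε}
          + volume {ξ' : E3 |
            ‖ξ'‖ ∈ Icc ((2:ℝ) ^ (k - 8)) ((2:ℝ) ^ (k + 8)) ∧
            ‖η‖ ∈ Icc ((2:ℝ) ^ (k - 8)) ((2:ℝ) ^ (k + 8)) ∧
            ‖ξ' - η‖ ≤ (2:ℝ) ^ (k₁ + 8) ∧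
            |Real.sqrt (1 + ‖ξ'‖ ^ 2) + s * Real.sqrt (1 + d * ‖ξ' - η‖ ^ 2)
              - Real.sqrt (1 + ‖η‖ ^ 2)| ≤ ε}
          ≤ ENNReal.ofReal (C * ε * (2:ℝ) ^ (3 * max k₁ 0)) := by
  obtain ⟨D, C, hD, hC, hmain⟩ := schur_half d hd
  refine ⟨D, 2 * C, hD, by linarith, ?_⟩
  intro s hs k hk ε hε ξ η
  have hs' : -s = 1 ∨ -s = -1 := by rcases hs with h | h <;> simp [h]
  have h2 := hmain k₁ s hs k hk ε hε η
  have h1 := hmain k₁ (-s) hs' k hk ε hε ξ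
  have hseteq : {η' : E3 |
      ‖ξ‖ ∈ Icc ((2:ℝ) ^ (k - 8)) ((2:ℝ) ^ (k + 8)) ∧
      ‖η'‖ ∈ Icc ((2:ℝ) ^ (k - 8)) ((2:ℝ) ^ (k + 8)) ∧
      ‖ξ - η'‖ ≤ (2:ℝ) ^ (k₁ + 8) ∧
      |Real.sqrt (1 + ‖ξ‖ ^ 2) + s * Real.sqrt (1 + d * ‖ξ - η'‖ ^ 2)
        - Real.sqrt (1 + ‖η'‖ ^ 2)| ≤ ε}
      = {x : E3 |
      ‖x‖ ∈ Icc ((2:ℝ) ^ (k - 8)) ((2:ℝ) ^ (k + 8)) ∧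
      ‖ξ‖ ∈ Icc ((2:ℝ) ^ (k - 8)) ((2:ℝ) ^ (k + 8)) ∧
      ‖x - ξ‖ ≤ (2:ℝ) ^ (k₁ + 8) ∧
      |Real.sqrt (1 + ‖x‖ ^ 2) + (-s) * Real.sqrt (1 + d * ‖x - ξ‖ ^ 2)
        - Real.sqrt (1 + ‖ξ‖ ^ 2)| ≤ ε} := by
    ext x
    simp only [mem_setOf_eq]
    have hn : ‖ξ - x‖ = ‖x - ξ‖ := norm_sub_rev _ _
    have habs : |Real.sqrt (1 + ‖ξ‖ ^ 2) + s * Real.sqrt (1 + d * ‖x - ξ‖ ^ 2)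
        - Real.sqrt (1 + ‖x‖ ^ 2)|
        = |Real.sqrt (1 + ‖x‖ ^ 2) + (-s) * Real.sqrt (1 + d * ‖x - ξ‖ ^ 2)
        - Real.sqrt (1 + ‖ξ‖ ^ 2)| := by
      rw [show Real.sqrt (1 + ‖ξ‖ ^ 2) + s * Real.sqrt (1 + d * ‖x - ξ‖ ^ 2)
          - Real.sqrt (1 + ‖x‖ ^ 2)
          = -(Real.sqrt (1 + ‖x‖ ^ 2) + (-s) * Real.sqrt (1 + d * ‖x - ξ‖ ^ 2)
          - Real.sqrt (1 + ‖ξ‖ ^ 2)) by ring, abs_neg]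
    constructor
    · rintro ⟨ha, hb, hc, he⟩
      rw [hn] at hc he
      exact ⟨hb, ha, hc, by rwa [habs] at he⟩
    · rintro ⟨ha, hb, hc, he⟩
      rw [← habs] at he
      rw [← hn] at hc he
      exact ⟨hb, ha, hc, he⟩
  rw [hseteq]
  refine le_trans (add_le_add h1 h2) ?_
  rw [← ENNReal.ofReal_add (by positivity) (by positivity)]
  apply ENNReal.ofReal_le_ofReal
  nlinarith [zpow_pos (show (0:ℝ) < 2 by norm_num) (3 * max k₁ 0), hε.le, hC.le]
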